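/- Suppose the sequent Γ, A₁∧A₂ is minimal, and Γ₁ ⊆ Γ and Γ₂ ⊆ Γ are chosen such that Γ₁, A₁ and Γ₂, A₂ are minimal. Then every formula occurrence of Γ lies in at least one of Γ₁ or Γ₂ (i.e., Γ is covered by the multiset union in the sense that Γ ⊆ Γ₁ + Γ₂ as multisets can be arranged: there exist Σ, Δ₁, Δ₂ with Γ = Σ,Δ₁,Δ₂, Γ₁ = Σ,Δ₁, Γ₂ = Σ,Δ₂). -/

import Mathlib

/-- Propositional formulas in negation normal form. -/
inductive Fm : Type
  | pos : ℕ → Fm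
  | neg : ℕ → Fm
  | conj : Fm → Fm → Fm
  | disj : Fm → Fm → Fm
  deriving DecidableEq

/-- Boolean evaluation of a formula under a valuation. -/
def Fm.eval (v : ℕ → Bool) : Fm → Bool
  | .pos p => v p
  | .neg p => !(v p)
  | .conj a b => a.eval v && b.eval v
  | .disj a b => a.eval v || b.eval v

/-- A sequent (nonempty multiset of formulas) is valid if under every
valuation some member is true (i.e. the disjunction is a tautology). -/
def Valid (Γ : Multiset Fm) : Prop :=
  Γ ≠ 0 ∧ ∀ v : ℕ → Bool, ∃ A ∈ Γ, Fm.eval v A = true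

/-- A sequent is minimal if it is valid and no proper sub-multiset is valid. -/
def MinimalSeq (Γ : Multiset Fm) : Prop :=
  Valid Γ ∧ ∀ Δ : Multiset Fm, Δ < Γ → ¬ Valid Δ

theorem stmt_3 (Γ Γ₁ Γ₂ : Multiset Fm) (A₁ A₂ : Fm)
    (hmin : MinimalSeq (Γ + {Fm.conj A₁ A₂}))
    (h₁ : Γ₁ ≤ Γ) (h₂ : Γ₂ ≤ Γ)
    (hmin₁ : MinimalSeq (Γ₁ + {A₁})) (hmin₂ : MinimalSeq (Γ₂ + {A₂})) :
    ∃ S Δ₁ Δ₂ : Multiset Fm, Γ = S + Δ₁ + Δ₂ ∧ Γ₁ = S + Δ₁ ∧ Γ₂ = S + Δ₂ := by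
  have hU : Γ₁ ∪ Γ₂ ≤ Γ := Multiset.union_le h₁ h₂
  have hEq : Γ₁ ∪ Γ₂ = Γ := by
    by_contra hne
    have hlt : Γ₁ ∪ Γ₂ < Γ := lt_of_le_of_ne hU hne
    apply hmin.2 ((Γ₁ ∪ Γ₂) + {Fm.conj A₁ A₂}) (by exact add_lt_add_left hlt _)
    constructor
    · intro h
      have : Fm.conj A₁ A₂ ∈ ((Γ₁ ∪ Γ₂) + {Fm.conj A₁ A₂} : Multiset Fm) := by simp
      rw [h] at this; simp at this
    · intro v
      by_cases hc : Fm.eval v (Fm.conj A₁ A₂) = true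
      · exact ⟨Fm.conj A₁ A₂, by simp, hc⟩
      · simp only [Fm.eval, Bool.and_eq_true, not_and] at hc
        rcases Bool.eq_false_or_eq_true (A₁.eval v) with h1 | h1
        · have h2 : A₂.eval v = false := by
            rcases Bool.eq_false_or_eq_true (A₂.eval v) with h2 | h2
            · exact absurd h2 (hc h1)
            · exact h2
          obtain ⟨A, hA, hAe⟩ := hmin₂.1.2 v
          rw [Multiset.mem_add, Multiset.mem_singleton] at hA
          rcases hA with hA | rfl
          · exact ⟨A, by simp [Multiset.mem_union, hA], hAe⟩
          · rw [h2] at hAe; simp at hAe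
        · obtain ⟨A, hA, hAe⟩ := hmin₁.1.2 v
          rw [Multiset.mem_add, Multiset.mem_singleton] at hA
          rcases hA with hA | rfl
          · exact ⟨A, by simp [Multiset.mem_union, hA], hAe⟩
          · rw [h1] at hAe; simp at hAe
  refine ⟨Γ₁ ∩ Γ₂, Γ₁ - Γ₁ ∩ Γ₂, Γ₂ - Γ₁ ∩ Γ₂, ?_, ?_, ?_⟩
  · rw [← hEq]
    ext a
    simp only [Multiset.count_union, Multiset.count_add, Multiset.count_inter, Multiset.count_sub]
    omega
  · ext a
    simp only [Multiset.count_add, Multiset.count_inter, Multiset.count_sub]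
    omega
  · ext a
    simp only [Multiset.count_add, Multiset.count_inter, Multiset.count_sub]
    omega
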